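/- A vector x in R^k is majorized by a vector y in R^k if and only if x lies in the convex hull of the set of all vectors obtained by permuting the coordinates of y. -/

import Mathlib

open scoped BigOperators

/-- The decreasing rearrangement of a vector in `ℝ^k`. -/
noncomputable def descSort {k : ℕ} (x : Fin k → ℝ) : Fin k → ℝ :=
  fun i => (x ∘ Tuple.sort x) i.rev

/-- Sum of the `m` largest entries of `x`, i.e. partial sum of the
decreasing rearrangement. -/
noncomputable def partSum {k : ℕ} (x : Fin k → ℝ) (m : ℕ) : ℝ :=
  ∑ i : Fin k, if (i : ℕ) < m then descSort x i else 0

/-- `Majorized x y` means `x ≺ y`. -/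
noncomputable def Majorized {k : ℕ} (x y : Fin k → ℝ) : Prop :=
  (∀ m : ℕ, m < k → partSum x m ≤ partSum y m) ∧ (∑ i, x i = ∑ i, y i)

/-! ### Auxiliary lemmas -/

/-- The permutation realizing the decreasing rearrangement. -/
noncomputable def descPerm {k : ℕ} (x : Fin k → ℝ) : Equiv.Perm (Fin k) :=
  (Fin.revPerm).trans (Tuple.sort x)

lemma descSort_apply {k : ℕ} (x : Fin k → ℝ) (i : Fin k) :
    descSort x i = x (descPerm x i) := rfl

lemma descSort_symm_apply {k : ℕ} (x : Fin k → ℝ) (j : Fin k) :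
    descSort x ((descPerm x).symm j) = x j := by
  rw [descSort_apply, Equiv.apply_symm_apply]

lemma antitone_descSort {k : ℕ} (x : Fin k → ℝ) : Antitone (descSort x) := by
  intro i j hij; exact Tuple.monotone_sort x (Fin.rev_le_rev.2 hij)

lemma monovary_of_antitone {k : ℕ} {f g : Fin k → ℝ} (hf : Antitone f) (hg : Antitone g) :
    Monovary f g := by
  intro i j h
  rcases le_or_gt j i with hji | hij
  · exact hf hji
  · exact absurd (hg hij.le) (not_le.2 h)

lemma strictMono_le_app {m k : ℕ} (f : Fin m → Fin k) (hf : StrictMono f) :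
    ∀ j : Fin m, (j : ℕ) ≤ (f j : ℕ) := by
  have H : ∀ n, ∀ hn : n < m, n ≤ (f ⟨n, hn⟩ : ℕ) := by
    intro n
    induction n with
    | zero => intro _; exact Nat.zero_le _
    | succ p ihp =>
      intro hn
      have hp : p < m := Nat.lt_of_succ_lt hn
      have h2 : f ⟨p, hp⟩ < f ⟨p+1, hn⟩ := hf (by simp [Fin.lt_def])
      have := Fin.lt_def.1 h2
      have := ihp hp
      omega
  intro j; simpa using H j j.isLt

lemma partSum_eq_filter {k : ℕ} (x : Fin k → ℝ) (m : ℕ) :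
    partSum x m = ∑ i ∈ Finset.univ.filter (fun i : Fin k => (i : ℕ) < m), descSort x i := by
  rw [partSum, Finset.sum_filter]

lemma card_filter_lt {k m : ℕ} (hm : m ≤ k) :
    (Finset.univ.filter (fun i : Fin k => (i : ℕ) < m)).card = m := by
  have h : ∀ j ∈ Finset.range m, j < k := fun j hj => lt_of_lt_of_le (Finset.mem_range.1 hj) hm
  have : Finset.univ.filter (fun i : Fin k => (i : ℕ) < m)
      = Finset.attachFin (Finset.range m) h := by
    ext i; simp [Finset.mem_attachFin]
  rw [this, Finset.card_attachFin, Finset.card_range]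

/-- Any subsum of `x` is at most the partial sum of the decreasing rearrangement with the
same number of terms. -/
lemma sum_le_partSum {k : ℕ} (x : Fin k → ℝ) (s : Finset (Fin k)) :
    ∑ i ∈ s, x i ≤ partSum x s.card := by
  classical
  set m := s.card with hm
  have hmk : m ≤ k := by simpa using Finset.card_le_card (Finset.subset_univ s)
  calc ∑ i ∈ s, x i = ∑ i ∈ s, descSort x ((descPerm x).symm i) := by
        exact Finset.sum_congr rfl fun i _ => (descSort_symm_apply x i).symm
    _ = ∑ j ∈ s.image (descPerm x).symm, descSort x j := by
        rw [Finset.sum_image (fun a _ b _ h => (descPerm x).symm.injective h)]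
    _ ≤ partSum x m := ?_
  set s' := s.image (descPerm x).symm with hs'
  have hcard : s'.card = m := by
    rw [hs', Finset.card_image_of_injective _ (descPerm x).symm.injective]
  set g := descSort x with hg
  have hganti : Antitone g := antitone_descSort x
  have heq : ∑ j ∈ s', g j = ∑ j : Fin m, g ((s'.orderIsoOfFin hcard j : Fin k)) := by
    rw [← Finset.sum_coe_sort s' g]
    exact (Equiv.sum_comp (s'.orderIsoOfFin hcard).toEquiv (fun i : s' => g i)).symm
  have hsm : StrictMono (fun j : Fin m => ((s'.orderIsoOfFin hcard j : Fin k))) :=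
    fun a b hab => (s'.orderIsoOfFin hcard).strictMono hab
  rw [heq, partSum_eq_filter]
  have hfil : ∑ i ∈ Finset.univ.filter (fun i : Fin k => (i : ℕ) < m), g i
      = ∑ j : Fin m, g (Fin.castLE hmk j) := by
    have hset : Finset.univ.filter (fun i : Fin k => (i : ℕ) < m)
        = Finset.map (Fin.castLEEmb hmk) Finset.univ := by
      ext i
      simp only [Finset.mem_filter, Finset.mem_univ, true_and, Finset.mem_map,
        Fin.castLEEmb_apply]
      constructor
      · intro h; exact ⟨⟨i, h⟩, by ext; simp⟩
      · rintro ⟨j, rfl⟩; simp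
    rw [hset, Finset.sum_map]
    rfl
  rw [hfil]
  apply Finset.sum_le_sum
  intro j _
  exact hganti (Fin.mk_le_of_le_val (strictMono_le_app _ hsm j))

/-- The partial sum is attained by some subset of the given cardinality. -/
lemma exists_finset_partSum {k : ℕ} (x : Fin k → ℝ) {m : ℕ} (hm : m ≤ k) :
    ∃ s : Finset (Fin k), s.card = m ∧ ∑ i ∈ s, x i = partSum x m := by
  classical
  set T := Finset.univ.filter (fun i : Fin k => (i : ℕ) < m) with hT
  refine ⟨T.image (descPerm x), ?_, ?_⟩
  · rw [Finset.card_image_of_injective _ (descPerm x).injective, card_filter_lt hm]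
  · rw [Finset.sum_image (fun a _ b _ h => (descPerm x).injective h), partSum_eq_filter]
    rfl

lemma partSum_total {k : ℕ} (x : Fin k → ℝ) : partSum x k = ∑ i, x i := by
  have h : partSum x k = ∑ i : Fin k, descSort x i := by
    rw [partSum]; exact Finset.sum_congr rfl fun i _ => if_pos i.isLt
  rw [h]
  exact Equiv.sum_comp (descPerm x) x

lemma partSum_eq_range {k : ℕ} (x : Fin k → ℝ) {m : ℕ} (hm : m ≤ k) :
    partSum x m = ∑ j ∈ Finset.range m, (if h : j < k then descSort x ⟨j, h⟩ else 0) := by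
  have h1 : partSum x m
      = ∑ i : Fin k,
        (fun j : ℕ => if j < m then (if h : j < k then descSort x ⟨j, h⟩ else 0) else 0)
          (i : ℕ) := by
    rw [partSum]
    refine Finset.sum_congr rfl fun i _ => ?_
    simp only [dif_pos i.isLt, Fin.eta]
  rw [h1]
  rw [show (∑ i : Fin k,
        (fun j : ℕ => if j < m then (if h : j < k then descSort x ⟨j, h⟩ else 0) else 0) (i : ℕ))
      = ∑ j ∈ Finset.range k,
        (fun j : ℕ => if j < m then (if h : j < k then descSort x ⟨j, h⟩ else 0) else 0) j
    from Fin.sum_univ_eq_sum_range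
      (fun j : ℕ => if j < m then (if h : j < k then descSort x ⟨j, h⟩ else 0) else 0) k]
  rw [← Finset.sum_subset (Finset.range_subset_range.2 hm)
    (fun j _ hj => if_neg (by simpa using hj))]
  exact Finset.sum_congr rfl fun j hj => if_pos (Finset.mem_range.1 hj)

/-- Abel-summation step: if `x ≺ y` then pairing the decreasing rearrangements against any
decreasingly rearranged weight vector is larger for `y`. -/
lemma abel_ineq {k : ℕ} (t x y : Fin k → ℝ) (h : Majorized x y) :
    ∑ i, descSort x i * descSort t i ≤ ∑ i, descSort y i * descSort t i := by
  set a : ℕ → ℝ := fun j => if h : j < k then descSort t ⟨j, h⟩ else 0 with ha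
  set dx : ℕ → ℝ := fun j => if h : j < k then descSort x ⟨j, h⟩ else 0 with hdx
  set dy : ℕ → ℝ := fun j => if h : j < k then descSort y ⟨j, h⟩ else 0 with hdy
  set d : ℕ → ℝ := fun j => dx j - dy j with hd
  have hG : ∀ m, m ≤ k → ∑ j ∈ Finset.range m, d j = partSum x m - partSum y m := by
    intro m hm
    rw [partSum_eq_range x hm, partSum_eq_range y hm, ← Finset.sum_sub_distrib]
  rw [← sub_nonpos, ← Finset.sum_sub_distrib]
  have hgoal : (∑ i : Fin k, (descSort x i * descSort t i - descSort y i * descSort t i))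
      = ∑ j ∈ Finset.range k, a j • d j := by
    rw [show (∑ j ∈ Finset.range k, a j • d j)
        = ∑ i : Fin k, (fun j : ℕ => a j • d j) (i : ℕ)
      from (Fin.sum_univ_eq_sum_range (fun j : ℕ => a j • d j) k).symm]
    refine Finset.sum_congr rfl fun i _ => ?_
    simp only [ha, hdx, hdy, hd, dif_pos i.isLt, Fin.eta, smul_eq_mul]
    ring
  rw [hgoal, Finset.sum_range_by_parts a d k]
  have htot : ∑ j ∈ Finset.range k, d j = 0 := by
    rw [hG k le_rfl, partSum_total, partSum_total, h.2, sub_self]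
  rw [htot, smul_zero, zero_sub, neg_nonpos]
  apply Finset.sum_nonneg
  intro i hi
  have hik : i + 1 < k := by have := Finset.mem_range.1 hi; omega
  have hi1 : i < k := by omega
  have h1 : a (i + 1) - a i ≤ 0 := by
    simp only [ha, dif_pos hik, dif_pos hi1]
    have := antitone_descSort t (show (⟨i, hi1⟩ : Fin k) ≤ ⟨i + 1, hik⟩ by simp [Fin.le_def])
    linarith
  have h2 : ∑ j ∈ Finset.range (i + 1), d j ≤ 0 := by
    rw [hG (i + 1) hik.le]
    have := h.1 (i + 1) hik
    linarith
  have hmn := mul_nonneg (neg_nonneg.2 h1) (neg_nonneg.2 h2)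
  rw [neg_mul_neg] at hmn
  simpa [smul_eq_mul] using hmn

/-- A vector `x ∈ ℝ^k` is majorized by `y ∈ ℝ^k` iff `x` lies in the convex
hull of the set of all coordinate permutations of `y`. -/
theorem majorized_iff_mem_convexHull_permutations {k : ℕ} (x y : Fin k → ℝ) :
    Majorized x y ↔
      x ∈ convexHull ℝ {z : Fin k → ℝ | ∃ σ : Equiv.Perm (Fin k), z = y ∘ σ} := by
  classical
  set S : Set (Fin k → ℝ) := {z : Fin k → ℝ | ∃ σ : Equiv.Perm (Fin k), z = y ∘ σ} with hS
  constructor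
  · -- forward: majorization implies membership, by separation
    intro hmaj
    by_contra hx
    have hSfin : S.Finite := by
      have : S = Set.range (fun σ : Equiv.Perm (Fin k) => y ∘ σ) := by
        ext z; simp [hS, eq_comm, Set.mem_setOf_eq]
      rw [this]; exact Set.finite_range _
    have hclosed : IsClosed (convexHull ℝ S) := (hSfin.isCompact_convexHull ℝ).isClosed
    obtain ⟨f, u, hfs, hfx⟩ :=
      geometric_hahn_banach_closed_point (convex_convexHull ℝ S) hclosed hx
    set t : Fin k → ℝ := fun i => f (Pi.single i 1) with ht
    have hf : ∀ z : Fin k → ℝ, f z = ∑ i, z i * t i := by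
      intro z
      conv_lhs => rw [← Finset.univ_sum_single z]
      rw [map_sum]
      refine Finset.sum_congr rfl fun i _ => ?_
      have hsingle : Pi.single i (z i) = z i • (Pi.single i 1 : Fin k → ℝ) := by
        rw [← Pi.single_smul, smul_eq_mul, mul_one]
      rw [hsingle, map_smul, smul_eq_mul]
    set σ₀ : Equiv.Perm (Fin k) := (descPerm t).symm.trans (descPerm y) with hσ₀
    have hyS : (y ∘ σ₀) ∈ convexHull ℝ S := subset_convexHull ℝ S ⟨σ₀, rfl⟩
    have hlt : f (y ∘ σ₀) < f x := lt_trans (hfs _ hyS) hfx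
    have key : f x ≤ f (y ∘ σ₀) := by
      rw [hf, hf]
      have s1 : ∑ i, x i * t i
          ≤ ∑ i, descSort x i * descSort t i := by
        have e1 : ∑ i, x i * t i
            = ∑ i, descSort x i * descSort t (((descPerm x).trans (descPerm t).symm) i) := by
          rw [← Equiv.sum_comp (descPerm x) (fun i => x i * t i)]
          refine Finset.sum_congr rfl fun i _ => ?_
          rw [Equiv.trans_apply, descSort_symm_apply, descSort_apply]
        rw [e1]
        exact (monovary_of_antitone (antitone_descSort x) (antitone_descSort t)
          ).sum_mul_comp_perm_le_sum_mul
      have s2 : ∑ i, descSort x i * descSort t i ≤ ∑ i, descSort y i * descSort t i :=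
        abel_ineq t x y hmaj
      have s3 : ∑ i, descSort y i * descSort t i = ∑ i, (y ∘ σ₀) i * t i := by
        rw [← Equiv.sum_comp (descPerm t) (fun j => (y ∘ σ₀) j * t j)]
        refine Finset.sum_congr rfl fun i _ => ?_
        have : (y ∘ σ₀) (descPerm t i) = descSort y i := by
          simp only [Function.comp_apply, hσ₀, Equiv.trans_apply, Equiv.symm_apply_apply]
          rfl
        rw [this]
        rfl
      calc ∑ i, x i * t i ≤ ∑ i, descSort x i * descSort t i := s1
        _ ≤ ∑ i, descSort y i * descSort t i := s2
        _ = ∑ i, (y ∘ σ₀) i * t i := s3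
    linarith
  · -- backward: convex hull membership implies majorization
    intro hx
    have hsub : S ⊆ {z : Fin k → ℝ | Majorized z y} := by
      rintro z ⟨σ, rfl⟩
      constructor
      · intro m hm
        obtain ⟨s, hsc, hss⟩ := exists_finset_partSum (y ∘ σ) (le_of_lt hm)
        rw [← hss]
        have himg : ∑ i ∈ s, (y ∘ σ) i = ∑ j ∈ s.image σ, y j := by
          rw [Finset.sum_image (fun a _ b _ h => σ.injective h)]
          rfl
        rw [himg]
        have hc : (s.image σ).card = m := by
          rw [Finset.card_image_of_injective _ σ.injective, hsc]
        calc ∑ j ∈ s.image σ, y j ≤ partSum y (s.image σ).card := sum_le_partSum y _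
          _ = partSum y m := by rw [hc]
      · exact Equiv.sum_comp σ y
    have hconv : Convex ℝ {z : Fin k → ℝ | Majorized z y} := by
      rintro z₁ hz₁ z₂ hz₂ a b ha hb hab
      constructor
      · intro m hm
        obtain ⟨s, hsc, hss⟩ := exists_finset_partSum (a • z₁ + b • z₂) (le_of_lt hm)
        rw [← hss]
        have hsplit : ∑ i ∈ s, (a • z₁ + b • z₂) i
            = a * ∑ i ∈ s, z₁ i + b * ∑ i ∈ s, z₂ i := by
          simp [Finset.sum_add_distrib, Finset.mul_sum]
        rw [hsplit]
        have h1 : ∑ i ∈ s, z₁ i ≤ partSum y m := by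
          calc ∑ i ∈ s, z₁ i ≤ partSum z₁ s.card := sum_le_partSum z₁ s
            _ = partSum z₁ m := by rw [hsc]
            _ ≤ partSum y m := hz₁.1 m hm
        have h2 : ∑ i ∈ s, z₂ i ≤ partSum y m := by
          calc ∑ i ∈ s, z₂ i ≤ partSum z₂ s.card := sum_le_partSum z₂ s
            _ = partSum z₂ m := by rw [hsc]
            _ ≤ partSum y m := hz₂.1 m hm
        calc a * ∑ i ∈ s, z₁ i + b * ∑ i ∈ s, z₂ i
            ≤ a * partSum y m + b * partSum y m := by
              gcongr
          _ = partSum y m := by rw [← add_mul, hab, one_mul]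
      · have e1 : ∑ i, (a • z₁ + b • z₂) i = a * (∑ i, z₁ i) + b * (∑ i, z₂ i) := by
          simp [Finset.sum_add_distrib, Finset.mul_sum]
        rw [e1, hz₁.2, hz₂.2, ← add_mul, hab, one_mul]
    exact convexHull_min hsub hconv hx
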